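/- Let U and V be two-dimensional real vector spaces and B : U × U → V a symmetric bilinear map. Then Q_B is surjective if and only if B is indefinite (i.e., for every nonzero λ ∈ V*, λ ∘ Q_B is neither positive-semidefinite nor negative-semidefinite). -/

import Mathlib

lemma aux_neg (a b x y : ℝ) (h1 : 1 ≤ a^2+b^2)
    (hu : 0 < -((x^2+y^2)*(a^2+b^2)) - (x^2-y^2)*a - (2*x*y)*b) : False := by
  have hCS : ((x^2-y^2)*a + (2*x*y)*b)^2 ≤ (a^2+b^2)*((x^2+y^2)^2) := by
    nlinarith [sq_nonneg (a*(2*x*y) - b*(x^2-y^2))]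
  have hNs : (0:ℝ) ≤ (x^2+y^2)*(a^2+b^2) := by positivity
  have hT : (x^2-y^2)*a + (2*x*y)*b < -((x^2+y^2)*(a^2+b^2)) := by linarith
  have hsq : ((x^2+y^2)*(a^2+b^2))^2 < ((x^2-y^2)*a + (2*x*y)*b)^2 := by nlinarith
  nlinarith [mul_nonneg (mul_nonneg (sq_nonneg (x^2+y^2)) (by linarith : (0:ℝ) ≤ a^2+b^2)) (by linarith : (0:ℝ) ≤ a^2+b^2-1)]

lemma quad_root (k m n : ℝ) (hk : 0 < k) (hn : 0 < n) :
    ∃ ρ : ℝ, 0 < ρ ∧ k*ρ^2 + 2*m*ρ - n = 0 := by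
  have hs2 : (Real.sqrt (m^2 + k*n))^2 = m^2 + k*n := Real.sq_sqrt (by positivity)
  have hsm : m < Real.sqrt (m^2 + k*n) := by
    nlinarith [Real.sqrt_nonneg (m^2 + k*n), mul_pos hk hn]
  refine ⟨(-m + Real.sqrt (m^2 + k*n))/k, div_pos (by linarith [hsm]) hk, ?_⟩
  field_simp
  nlinarith [hs2]

lemma aux_rho (a b v1 v2 : ℝ) (hab : a^2 + b^2 < 1) (hv : v1^2 + v2^2 ≠ 0) :
    ∃ ρ : ℝ, 0 < ρ ∧ (v1 - ρ*a)^2 + (v2 - ρ*b)^2 = ρ^2 := by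
  have hnpos : 0 < v1^2 + v2^2 := lt_of_le_of_ne (by positivity) (Ne.symm hv)
  obtain ⟨ρ, hρ, he⟩ := quad_root (1-a^2-b^2) (a*v1+b*v2) (v1^2+v2^2) (by linarith) hnpos
  exact ⟨ρ, hρ, by linear_combination -he⟩

lemma aux_xy (p q ρ : ℝ) (hρ : 0 < ρ) (h : p^2 + q^2 = ρ^2) :
    ∃ x y : ℝ, x^2 + y^2 = ρ ∧ x^2 - y^2 = p ∧ 2*x*y = q := by
  by_cases hp : ρ + p = 0
  · have hq : q = 0 := by nlinarith
    refine ⟨0, Real.sqrt ρ, ?_, ?_, ?_⟩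
    · simp [Real.sq_sqrt hρ.le]
    · simp [Real.sq_sqrt hρ.le]; linarith
    · simp [hq]
  · have hple : p^2 ≤ ρ^2 := by nlinarith
    have habs : -ρ ≤ p := by nlinarith [abs_le_abs (le_refl p), neg_abs_le p, sq_abs p, sq_abs ρ]
    have hp' : 0 < ρ + p := lt_of_le_of_ne (by linarith) (Ne.symm hp)
    set x := Real.sqrt ((ρ+p)/2) with hx
    have hx2 : x^2 = (ρ+p)/2 := Real.sq_sqrt (by linarith)
    have hxpos : 0 < x := Real.sqrt_pos.mpr (by linarith)
    refine ⟨x, q/(2*x), ?_, ?_, ?_⟩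
    · field_simp
      nlinarith [hx2]
    · field_simp
      nlinarith [hx2]
    · field_simp

set_option maxHeartbeats 2000000 in
theorem surjective_iff_indefinite_dim_two
    {U V : Type*} [AddCommGroup U] [Module ℝ U] [FiniteDimensional ℝ U]
    [AddCommGroup V] [Module ℝ V] [FiniteDimensional ℝ V]
    (hU : Module.finrank ℝ U = 2) (hV : Module.finrank ℝ V = 2)
    (B : U →ₗ[ℝ] U →ₗ[ℝ] V) (hB : ∀ u v, B u v = B v u) :
    Function.Surjective (fun u => B u u) ↔
      (∀ l : V →ₗ[ℝ] ℝ, l ≠ 0 →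
        (∃ u : U, 0 < l (B u u)) ∧ (∃ u : U, l (B u u) < 0)) := by
  constructor
  · intro hsurj l hl
    have hex : ∃ v, l v ≠ 0 := by
      by_contra h
      push_neg at h
      exact hl (by ext v; simp [h v])
    obtain ⟨v, hv⟩ := hex
    constructor
    · obtain ⟨u, hu⟩ := hsurj (((l v)⁻¹) • v)
      refine ⟨u, ?_⟩
      simp only at hu
      rw [hu, map_smul, smul_eq_mul, inv_mul_cancel₀ hv]
      norm_num
    · obtain ⟨u, hu⟩ := hsurj ((-(l v)⁻¹) • v)
      refine ⟨u, ?_⟩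
      simp only at hu
      rw [hu, map_smul, smul_eq_mul, neg_mul, inv_mul_cancel₀ hv]
      norm_num
  · intro hind v
    -- basis of U
    let bU : Module.Basis (Fin 2) ℝ U := Module.finBasisOfFinrankEq ℝ U hU
    set u1 : U := bU 0 with hu1
    set u2 : U := bU 1 with hu2
    set P : V := B u1 u1 with hP
    set R : V := B u1 u2 with hR
    set S : V := B u2 u2 with hS
    set A : V := (2⁻¹ : ℝ) • (P + S) with hA
    set Bv : V := (2⁻¹ : ℝ) • (P - S) with hBv
    set Cv : V := R with hCv
    have key : ∀ x y : ℝ, B (x • u1 + y • u2) (x • u1 + y • u2)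
        = (x^2 + y^2) • A + (x^2 - y^2) • Bv + (2*x*y) • Cv := by
      intro x y
      have h21 : B u2 u1 = R := (hB u1 u2).symm
      simp only [map_add, map_smul, LinearMap.add_apply, LinearMap.smul_apply,
        ← hP, ← hS, h21, ← hR, hA, hBv, hCv]
      module
    have hrep : ∀ u : U, ∃ x y : ℝ, u = x • u1 + y • u2 := by
      intro u
      refine ⟨bU.repr u 0, bU.repr u 1, ?_⟩
      have := bU.sum_repr u
      rw [Fin.sum_univ_two] at this
      exact this.symm
    -- linear independence of Bv, Cv
    have hind2 : LinearIndependent ℝ ![Bv, Cv] := by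
      by_contra hni
      have hw : ∃ w : V, Bv ∈ Submodule.span ℝ {w} ∧ Cv ∈ Submodule.span ℝ {w} := by
        rw [LinearIndependent.pair_iff] at hni
        push_neg at hni
        obtain ⟨s, t, hst, hne⟩ := hni
        rcases eq_or_ne s 0 with rfl | hs0
        · have ht0 := hne rfl
          have hC0 : Cv = 0 := by
            have h0 : t • Cv = 0 := by simpa using hst
            exact (smul_eq_zero.mp h0).resolve_left ht0
          exact ⟨Bv, Submodule.mem_span_singleton_self _, by simp [hC0]⟩
        · refine ⟨Cv, ?_, Submodule.mem_span_singleton_self _⟩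
          have h1 : s • Bv = -(t • Cv) := eq_neg_of_add_eq_zero_left hst
          have h2 : Bv = (-(s⁻¹ * t)) • Cv := by
            apply smul_right_injective V hs0
            show s • Bv = s • (-(s⁻¹ * t) • Cv)
            rw [h1, smul_smul, ← neg_smul]
            congr 1
            field_simp
          rw [h2]
          exact Submodule.smul_mem _ _ (Submodule.mem_span_singleton_self _)
      obtain ⟨w, hBw, hCw⟩ := hw
      have hlt : Submodule.span ℝ ({w} : Set V) < ⊤ := by
        apply span_lt_top_of_card_lt_finrank
        simp [hV]
      obtain ⟨f, hf0, hfmap⟩ := Submodule.exists_dual_map_eq_bot_of_lt_top hlt inferInstance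
      have hfB : f Bv = 0 := by
        have : f Bv ∈ Submodule.map f (Submodule.span ℝ {w}) := ⟨Bv, hBw, rfl⟩
        rwa [hfmap, Submodule.mem_bot] at this
      have hfC : f Cv = 0 := by
        have : f Cv ∈ Submodule.map f (Submodule.span ℝ {w}) := ⟨Cv, hCw, rfl⟩
        rwa [hfmap, Submodule.mem_bot] at this
      -- flip sign so that f A ≤ 0
      obtain ⟨g, hg0, hgB, hgC, hgA⟩ : ∃ g : V →ₗ[ℝ] ℝ, g ≠ 0 ∧ g Bv = 0 ∧ g Cv = 0 ∧ g A ≤ 0 := by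
        rcases le_or_gt (f A) 0 with h | h
        · exact ⟨f, hf0, hfB, hfC, h⟩
        · exact ⟨-f, neg_ne_zero.mpr hf0, by simp [hfB], by simp [hfC], by simp; linarith⟩
      obtain ⟨u, hu⟩ := (hind g hg0).1
      obtain ⟨x, y, rfl⟩ := hrep u
      rw [key] at hu
      simp only [map_add, map_smul, smul_eq_mul, hgB, hgC, mul_zero, add_zero] at hu
      nlinarith [sq_nonneg x, sq_nonneg y, hu]
    have hcard : Fintype.card (Fin 2) = Module.finrank ℝ V := by simp [hV]
    let bV : Module.Basis (Fin 2) ℝ V := basisOfLinearIndependentOfCardEqFinrank hind2 hcard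
    have hbV : ⇑bV = ![Bv, Cv] := coe_basisOfLinearIndependentOfCardEqFinrank hind2 hcard
    have hbV0 : bV 0 = Bv := by rw [hbV]; simp
    have hbV1 : bV 1 = Cv := by rw [hbV]; simp
    set a : ℝ := bV.repr A 0 with ha
    set b : ℝ := bV.repr A 1 with hb
    clear_value a b
    have hAab : A = a • Bv + b • Cv := by
      have h := bV.sum_repr A
      rw [Fin.sum_univ_two] at h
      rw [← h, hbV0, hbV1, ← ha, ← hb]
    have hab2 : a^2 + b^2 < 1 := by
      by_contra hcon
      push_neg at hcon
      set g : V →ₗ[ℝ] ℝ := -(a • bV.coord 0 + b • bV.coord 1) with hg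
      clear_value g
      have hgB : g Bv = -a := by
        simp [hg, Module.Basis.coord_apply, ← hbV0, Module.Basis.repr_self]
      have hgC : g Cv = -b := by
        simp [hg, Module.Basis.coord_apply, ← hbV1, Module.Basis.repr_self]
      have hg0 : g ≠ 0 := by
        intro h0
        have h1 : g Bv = 0 := by rw [h0]; simp
        have h2 : g Cv = 0 := by rw [h0]; simp
        rw [hgB] at h1
        rw [hgC] at h2
        nlinarith [hcon]
      obtain ⟨u, hu⟩ := (hind g hg0).1
      obtain ⟨x, y, rfl⟩ := hrep u
      have hval : g (B (x • u1 + y • u2) (x • u1 + y • u2))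
          = -((x^2+y^2)*(a^2+b^2)) - (x^2-y^2)*a - (2*x*y)*b := by
        rw [key, hAab]
        simp only [map_add, map_smul, smul_eq_mul, hgB, hgC]
        ring
      rw [hval] at hu
      exact aux_neg a b x y hcon hu
    by_cases hv0 : v = 0
    · exact ⟨0, by simp [hv0]⟩
    · set v1 : ℝ := bV.repr v 0 with hv1d
      set v2 : ℝ := bV.repr v 1 with hv2d
      clear_value v1 v2
      have hvab : v = v1 • Bv + v2 • Cv := by
        have h := bV.sum_repr v
        rw [Fin.sum_univ_two] at h
        rw [← h, hbV0, hbV1, ← hv1d, ← hv2d]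
      have hv12 : v1^2 + v2^2 ≠ 0 := by
        intro h
        have h1 : v1 = 0 := by nlinarith [sq_nonneg v1, sq_nonneg v2]
        have h2 : v2 = 0 := by nlinarith [sq_nonneg v1, sq_nonneg v2]
        apply hv0
        rw [hvab, h1, h2]
        simp
      obtain ⟨ρ, hρ, heq⟩ := aux_rho a b v1 v2 hab2 hv12
      obtain ⟨x, y, h1, h2, h3⟩ := aux_xy (v1 - ρ*a) (v2 - ρ*b) ρ hρ heq
      refine ⟨x • u1 + y • u2, ?_⟩
      show B (x • u1 + y • u2) (x • u1 + y • u2) = v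
      rw [key, h1, h2, h3, hAab, hvab]
      module
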